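/- Fix integers N, m, s ≥ 1, real numbers Δt and ΔW¹,…,ΔW^m, C² Hamiltonians H, h₁,…,h_m : ℝ^N × ℝ^N → ℝ, and C¹ forces F, f₁,…,f_m : ℝ^N × ℝ^N → ℝ^N. Let real coefficients a_{ij}, ā_{ij}, â_{ij}, b_{ij}, b̄_{ij}, b̂_{ij}, α_i, α̂_i, β_i, β̂_i (i,j = 1,…,s) satisfy the symplecticity conditions: α_i ā_{ij} + α_j a_{ji} = α_i α_j, β_i b̄_{ij} + β_j b_{ji} = β_i β_j, β_i ā_{ij} + α_j b_{ji} = β_i α_j, α_i b̄_{ij} + β_j a_{ji} = α_i β_j, α_i â_{ij} + α̂_j a_{ji} = α_i α̂_j, α_i b̂_{ij} + β̂_j a_{ji} = α_i β̂_j, β_i â_{ij} + α̂_j b_{ji} = β_i α̂_j, and β_i b̂_{ij} + β̂_j b_{ji} = β_i β̂_j for all i,j. Let U ⊆ ℝ^N × ℝ^N be open and let Q_i, P_i (i = 1,…,s), q₊, p₋ : U → ℝ^N be differentiable maps which, for every (x,y) ∈ U, satisfy the partitioned Runge–Kutta relations with q_k = x, p_{k+1} = y, p_k = p₋(x,y),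 q_{k+1} = q₊(x,y). Define H⁺_d(x,y) = y·q₊(x,y) − Δt Σ_i α_i ( P_i·∂H/∂p(Q_i,P_i) − H(Q_i,P_i) ) − Σ_r ΔW^r Σ_i β_i ( P_i·∂h_r/∂p(Q_i,P_i) − h_r(Q_i,P_i) ), F⁻_d(x,y) = Δt Σ_i α̂_i (∂Q_i/∂x)ᵀ F(Q_i,P_i) + Σ_r ΔW^r Σ_i β̂_i (∂Q_i/∂x)ᵀ f_r(Q_i,P_i), and F⁺_d(x,y) = Δt Σ_i α̂_i (∂Q_i/∂y)ᵀ F(Q_i,P_i) + Σ_r ΔW^r Σ_i β̂_i (∂Q_i/∂y)ᵀ f_r(Q_i,P_i). Then for all (x,y) ∈ U: D₂H⁺_d(x,y) = q₊(x,y) + F⁺_d(x,y) and D₁H⁺_d(x,y) = p₋(x,y) + F⁻_d(x,y). (Pathwise form of Theorem 3.2: the s-stage mean-square Lagrange–d'Alembert partitioned Runge–Kutta method is a stochastic Lagrange–d'Alembert variational integrator.) -/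

import Mathlib

/- STATEMENT 1: The s-stage mean-square Lagrange–d'Alembert partitioned Runge–Kutta
   method is a stochastic Lagrange–d'Alembert variational integrator
   (pathwise form of Theorem 3.2). -/

noncomputable section
open scoped BigOperators

abbrev E (N : ℕ) : Type := EuclideanSpace ℝ (Fin N)

/-- Gradient with respect to the first argument. -/
noncomputable def D1 {N : ℕ} (H : E N × E N → ℝ) (x y : E N) : E N :=
  gradient (fun x' => H (x', y)) x

/-- Gradient with respect to the second argument. -/
noncomputable def D2 {N : ℕ} (H : E N × E N → ℝ) (x y : E N) : E N :=
  gradient (fun y' => H (x, y')) y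

/-! ### Auxiliary machinery -/

section Aux

open InnerProductSpace

/-- Channel combinator: `none` is the drift channel, `some r` the `r`-th noise channel. -/
def ch {m : ℕ} {β : Sort*} (x : β) (xs : Fin m → β) : Option (Fin m) → β :=
  fun g => g.elim x xs

@[simp] lemma ch_none {m : ℕ} {β : Sort*} (x : β) (xs : Fin m → β) : ch x xs none = x := rfl

@[simp] lemma ch_some {m : ℕ} {β : Sort*} (x : β) (xs : Fin m → β) (r : Fin m) :
    ch x xs (some r) = xs r := rfl

lemma inner_gradient_eq {V : Type*} [NormedAddCommGroup V] [InnerProductSpace ℝ V]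
    [CompleteSpace V] (f : V → ℝ) (x u : V) :
    (inner ℝ (gradient f x) u : ℝ) = fderiv ℝ f x u := by
  rw [gradient, toDual_symm_apply]

lemma fderiv_partial1 {N : ℕ} (G : E N × E N → ℝ) {x y : E N}
    (hG : DifferentiableAt ℝ G (x, y)) :
    fderiv ℝ (fun x' => G (x', y)) x
      = (fderiv ℝ G (x, y)).comp (ContinuousLinearMap.inl ℝ (E N) (E N)) :=
  (hG.hasFDerivAt.comp x (hasFDerivAt_prodMk_left x y)).fderiv

lemma fderiv_partial2 {N : ℕ} (G : E N × E N → ℝ) {x y : E N}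
    (hG : DifferentiableAt ℝ G (x, y)) :
    fderiv ℝ (fun y' => G (x, y')) y
      = (fderiv ℝ G (x, y)).comp (ContinuousLinearMap.inr ℝ (E N) (E N)) :=
  (hG.hasFDerivAt.comp y (hasFDerivAt_prodMk_right x y)).fderiv

lemma fderiv_eq_inner {N : ℕ} (G : E N × E N → ℝ) {x y : E N}
    (hG : DifferentiableAt ℝ G (x, y)) (u v : E N) :
    fderiv ℝ G (x, y) (u, v)
      = (inner ℝ (D1 G x y) u : ℝ) + (inner ℝ (D2 G x y) v : ℝ) := by
  rw [D1, D2, inner_gradient_eq, inner_gradient_eq, fderiv_partial1 G hG, fderiv_partial2 G hG]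
  have : ((u, v) : E N × E N) = (u, 0) + (0, v) := by simp
  rw [this, map_add]
  rfl

lemma differentiable_D2 {N : ℕ} (G : E N × E N → ℝ) (hG : ContDiff ℝ 2 G) :
    Differentiable ℝ (fun p : E N × E N => D2 G p.1 p.2) := by
  have h1 : Differentiable ℝ (fderiv ℝ G) :=
    (hG.fderiv_right (m := 1) (by norm_num)).differentiable one_ne_zero
  set Ψ : ((E N × E N) →L[ℝ] ℝ) →L[ℝ] E N :=
    ((toDual ℝ (E N)).symm.toContinuousLinearEquiv.toContinuousLinearMap).comp
      (((ContinuousLinearMap.compL ℝ (E N) (E N × E N) ℝ).flip)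
        (ContinuousLinearMap.inr ℝ (E N) (E N))) with hΨ
  have heq : (fun p : E N × E N => D2 G p.1 p.2) = fun p => Ψ (fderiv ℝ G p) := by
    funext p
    have : D2 G p.1 p.2 = (toDual ℝ (E N)).symm
        ((fderiv ℝ G p).comp (ContinuousLinearMap.inr ℝ (E N) (E N))) := by
      rw [D2, gradient, fderiv_partial2 G (hG.differentiable (by norm_num) p)]
    simpa [hΨ] using this
  rw [heq]
  exact Ψ.differentiable.comp h1

lemma sum4_swap {γ ι : Type*} [Fintype γ] [Fintype ι] (f : γ → ι → γ → ι → ℝ) :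
    ∑ g, ∑ i, ∑ g', ∑ j, f g i g' j = ∑ g, ∑ i, ∑ g', ∑ j, f g' j g i := by
  calc ∑ g, ∑ i, ∑ g', ∑ j, f g i g' j
      = ∑ p : γ × ι, ∑ q : γ × ι, f p.1 p.2 q.1 q.2 := by
        simp only [Fintype.sum_prod_type]
    _ = ∑ q : γ × ι, ∑ p : γ × ι, f p.1 p.2 q.1 q.2 := Finset.sum_comm
    _ = ∑ g, ∑ i, ∑ g', ∑ j, f g' j g i := by
        simp only [Fintype.sum_prod_type]

lemma key {V : Type*} [NormedAddCommGroup V] [InnerProductSpace ℝ V]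
    {ι γ : Type*} [Fintype ι] [Fintype γ]
    (w : γ → ℝ) (A Abar Ahat : γ → ι → ι → ℝ) (al alh : γ → ι → ℝ)
    (hbar : ∀ g g' i j, al g i * Abar g' i j + al g' j * A g j i = al g i * al g' j)
    (hhat : ∀ g g' i j, al g i * Ahat g' i j + alh g' j * A g j i = al g i * alh g' j)
    (G K : γ → ι → V) (δ : γ → ι → V) :
    (∑ g, w g * ∑ i, al g i *
      (inner ℝ (∑ g', w g' • (∑ j, (Abar g' i j - al g' j) • G g' j
                          + ∑ j, (alh g' j - Ahat g' i j) • K g' j)) (δ g i) : ℝ))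
    + ∑ g, w g * ∑ i, al g i *
      (inner ℝ (G g i) (∑ g', w g' • ∑ j, A g' i j • δ g' j) : ℝ)
    = ∑ g, w g * ∑ i, alh g i *
      (inner ℝ (K g i) (∑ g', w g' • ∑ j, A g' i j • δ g' j) : ℝ) := by
  have e2 : ∑ g, w g * ∑ i, al g i *
      (inner ℝ (G g i) (∑ g', w g' • ∑ j, A g' i j • δ g' j) : ℝ)
      = ∑ g, ∑ i, ∑ g', ∑ j,
        w g' * w g * (al g' j * A g j i) * (inner ℝ (G g' j) (δ g i) : ℝ) := by
    rw [sum4_swap (fun g i g' j => w g' * w g * (al g' j * A g j i) * (inner ℝ (G g' j) (δ g i) : ℝ))]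
    simp only [inner_sum, real_inner_smul_right, Finset.mul_sum]
    apply Finset.sum_congr rfl; intro g _
    apply Finset.sum_congr rfl; intro i _
    apply Finset.sum_congr rfl; intro g' _
    apply Finset.sum_congr rfl; intro j _
    ring
  have e3 : ∑ g, w g * ∑ i, alh g i *
      (inner ℝ (K g i) (∑ g', w g' • ∑ j, A g' i j • δ g' j) : ℝ)
      = ∑ g, ∑ i, ∑ g', ∑ j,
        w g' * w g * (alh g' j * A g j i) * (inner ℝ (K g' j) (δ g i) : ℝ) := by
    rw [sum4_swap (fun g i g' j => w g' * w g * (alh g' j * A g j i) * (inner ℝ (K g' j) (δ g i) : ℝ))]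
    simp only [inner_sum, real_inner_smul_right, Finset.mul_sum]
    apply Finset.sum_congr rfl; intro g _
    apply Finset.sum_congr rfl; intro i _
    apply Finset.sum_congr rfl; intro g' _
    apply Finset.sum_congr rfl; intro j _
    ring
  have e1 : (∑ g, w g * ∑ i, al g i *
      (inner ℝ (∑ g', w g' • (∑ j, (Abar g' i j - al g' j) • G g' j
                          + ∑ j, (alh g' j - Ahat g' i j) • K g' j)) (δ g i) : ℝ))
      = ∑ g, ∑ i, ∑ g', ∑ j,
        (w g * w g' * (al g i * (Abar g' i j - al g' j)) * (inner ℝ (G g' j) (δ g i) : ℝ)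
        + w g * w g' * (al g i * (alh g' j - Ahat g' i j)) * (inner ℝ (K g' j) (δ g i) : ℝ)) := by
    simp only [sum_inner, inner_add_left, real_inner_smul_left, Finset.mul_sum,
      ← Finset.sum_add_distrib]
    apply Finset.sum_congr rfl; intro g _
    apply Finset.sum_congr rfl; intro i _
    apply Finset.sum_congr rfl; intro g' _
    apply Finset.sum_congr rfl; intro j _
    ring
  rw [e1, e2, e3, ← Finset.sum_add_distrib]
  apply Finset.sum_congr rfl; intro g _
  rw [← Finset.sum_add_distrib]
  apply Finset.sum_congr rfl; intro i _
  rw [← Finset.sum_add_distrib]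
  apply Finset.sum_congr rfl; intro g' _
  rw [← Finset.sum_add_distrib]
  apply Finset.sum_congr rfl; intro j _
  linear_combination (w g * w g' * (inner ℝ (G g' j) (δ g i) : ℝ)) * hbar g g' i j
    - (w g * w g' * (inner ℝ (K g' j) (δ g i) : ℝ)) * hhat g g' i j

lemma assemble {V : Type*} [NormedAddCommGroup V] [InnerProductSpace ℝ V]
    {ι γ : Type*} [Fintype ι] [Fintype γ]
    (w : γ → ℝ) (A Abar Ahat : γ → ι → ι → ℝ) (al alh : γ → ι → ℝ)
    (hbar : ∀ g g' i j, al g i * Abar g' i j + al g' j * A g j i = al g i * al g' j)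
    (hhat : ∀ g g' i j, al g i * Ahat g' i j + alh g' j * A g j i = al g i * alh g' j)
    (u v y qp pm Fm Fp δq : V) (Pz δQ δP : ι → V) (Gv Kv Hp δ : γ → ι → V)
    (h1 : δq = u + ∑ g, w g • ∑ i, al g i • δ g i)
    (h2 : ∀ i, δQ i = u + ∑ g, w g • ∑ j, A g i j • δ g j)
    (h3 : y = pm - ∑ g, w g • ∑ i, al g i • Gv g i + ∑ g, w g • ∑ i, alh g i • Kv g i)
    (h4 : ∀ i, y - Pz i = ∑ g, w g • (∑ j, (Abar g i j - al g j) • Gv g j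
                          + ∑ j, (alh g j - Ahat g i j) • Kv g j))
    (h5 : (inner ℝ Fm u : ℝ) + (inner ℝ Fp v : ℝ)
        = ∑ g, w g * ∑ i, alh g i * (inner ℝ (Kv g i) (δQ i) : ℝ)) :
    (inner ℝ v qp : ℝ) + (inner ℝ y δq : ℝ)
      - ∑ g, w g * ∑ i, al g i *
          (((inner ℝ (Pz i) (δ g i) : ℝ) + (inner ℝ (δP i) (Hp g i) : ℝ))
            - ((inner ℝ (Gv g i) (δQ i) : ℝ) + (inner ℝ (Hp g i) (δP i) : ℝ)))
    = (inner ℝ (pm + Fm) u : ℝ) + (inner ℝ (qp + Fp) v : ℝ) := by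
  have K := key w A Abar Ahat al alh hbar hhat Gv Kv δ
  have h4' : ∀ i, (∑ g, w g • (∑ j, (Abar g i j - al g j) • Gv g j
      + ∑ j, (alh g j - Ahat g i j) • Kv g j)) = y - Pz i := fun i => (h4 i).symm
  simp only [h4'] at K
  have h2' : ∀ i, (∑ g, w g • ∑ j, A g i j • δ g j) = δQ i - u := fun i => by
    rw [h2 i]; abel
  simp only [h2'] at K
  have cancel : ∀ g, (∑ i, al g i *
          (((inner ℝ (Pz i) (δ g i) : ℝ) + (inner ℝ (δP i) (Hp g i) : ℝ))
            - ((inner ℝ (Gv g i) (δQ i) : ℝ) + (inner ℝ (Hp g i) (δP i) : ℝ))))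
      = ∑ i, al g i * ((inner ℝ (Pz i) (δ g i) : ℝ) - (inner ℝ (Gv g i) (δQ i) : ℝ)) := by
    intro g
    apply Finset.sum_congr rfl; intro i _
    rw [real_inner_comm (δP i) (Hp g i)]; ring
  simp only [cancel]
  have s1 : (inner ℝ y δq : ℝ) = (inner ℝ y u : ℝ)
      + ∑ g, w g * ∑ i, al g i * (inner ℝ y (δ g i) : ℝ) := by
    rw [h1]
    simp [inner_add_right, inner_sum, real_inner_smul_right, Finset.mul_sum]
  have s3 : (inner ℝ y u : ℝ) = (inner ℝ pm u : ℝ)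
      - ∑ g, w g * ∑ i, al g i * (inner ℝ (Gv g i) u : ℝ)
      + ∑ g, w g * ∑ i, alh g i * (inner ℝ (Kv g i) u : ℝ) := by
    rw [h3]
    simp [inner_sub_left, inner_add_left, sum_inner, real_inner_smul_left, Finset.mul_sum]
  rw [real_inner_comm qp v, s1, s3]
  simp only [inner_sub_left, inner_sub_right, inner_add_left, mul_sub, mul_add,
    Finset.sum_sub_distrib, Finset.sum_add_distrib] at K h5 ⊢
  linarith [K, h5]

end Aux

set_option maxHeartbeats 2000000 in
theorem meanSquare_LdA_PRK_is_variational_integrator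
    {N m s : ℕ} (hN : 1 ≤ N) (hm : 1 ≤ m) (hs : 1 ≤ s)
    (Δt : ℝ) (ΔW : Fin m → ℝ)
    (H : E N × E N → ℝ) (h : Fin m → E N × E N → ℝ)
    (hH : ContDiff ℝ 2 H) (hh : ∀ r, ContDiff ℝ 2 (h r))
    (F : E N × E N → E N) (f : Fin m → E N × E N → E N)
    (hF : ContDiff ℝ 1 F) (hf : ∀ r, ContDiff ℝ 1 (f r))
    (a abar ahat b bbar bhat : Fin s → Fin s → ℝ)
    (α αhat β βhat : Fin s → ℝ)
    (hc1 : ∀ i j, α i * abar i j + α j * a j i = α i * α j)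
    (hc2 : ∀ i j, β i * bbar i j + β j * b j i = β i * β j)
    (hc3 : ∀ i j, β i * abar i j + α j * b j i = β i * α j)
    (hc4 : ∀ i j, α i * bbar i j + β j * a j i = α i * β j)
    (hc5 : ∀ i j, α i * ahat i j + αhat j * a j i = α i * αhat j)
    (hc6 : ∀ i j, α i * bhat i j + βhat j * a j i = α i * βhat j)
    (hc7 : ∀ i j, β i * ahat i j + αhat j * b j i = β i * αhat j)
    (hc8 : ∀ i j, β i * bhat i j + βhat j * b j i = β i * βhat j)
    (U : Set (E N × E N)) (hU : IsOpen U)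
    (Q P : Fin s → E N × E N → E N)
    (qplus pminus : E N × E N → E N)
    (hQdiff : ∀ i, ∀ z ∈ U, DifferentiableAt ℝ (Q i) z)
    (hPdiff : ∀ i, ∀ z ∈ U, DifferentiableAt ℝ (P i) z)
    (hqdiff : ∀ z ∈ U, DifferentiableAt ℝ qplus z)
    (hpdiff : ∀ z ∈ U, DifferentiableAt ℝ pminus z)
    -- the partitioned Runge–Kutta relations, with q_k = z.1, p_{k+1} = z.2,
    -- p_k = pminus z, q_{k+1} = qplus z:
    (hQ : ∀ z ∈ U, ∀ i, Q i z = z.1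
        + Δt • ∑ j, a i j • D2 H (Q j z) (P j z)
        + ∑ r, ΔW r • ∑ j, b i j • D2 (h r) (Q j z) (P j z))
    (hP : ∀ z ∈ U, ∀ i, P i z = pminus z
        - Δt • ∑ j, abar i j • D1 H (Q j z) (P j z)
        - ∑ r, ΔW r • ∑ j, bbar i j • D1 (h r) (Q j z) (P j z)
        + Δt • ∑ j, ahat i j • F (Q j z, P j z)
        + ∑ r, ΔW r • ∑ j, bhat i j • f r (Q j z, P j z))
    (hqp : ∀ z ∈ U, qplus z = z.1
        + Δt • ∑ i, α i • D2 H (Q i z) (P i z)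
        + ∑ r, ΔW r • ∑ i, β i • D2 (h r) (Q i z) (P i z))
    (hpp : ∀ z ∈ U, z.2 = pminus z
        - Δt • ∑ i, α i • D1 H (Q i z) (P i z)
        - ∑ r, ΔW r • ∑ i, β i • D1 (h r) (Q i z) (P i z)
        + Δt • ∑ i, αhat i • F (Q i z, P i z)
        + ∑ r, ΔW r • ∑ i, βhat i • f r (Q i z, P i z))
    -- the discrete Hamiltonian:
    (Hd : E N × E N → ℝ)
    (hHd : ∀ z : E N × E N, Hd z = (inner ℝ z.2 (qplus z) : ℝ)
        - Δt * ∑ i, α i *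
            ((inner ℝ (P i z) (D2 H (Q i z) (P i z)) : ℝ) - H (Q i z, P i z))
        - ∑ r, ΔW r * ∑ i, β i *
            ((inner ℝ (P i z) (D2 (h r) (Q i z) (P i z)) : ℝ) - h r (Q i z, P i z)))
    -- the discrete forces:
    (Fminus Fplus : E N × E N → E N)
    (hFm : ∀ z : E N × E N, Fminus z =
        Δt • ∑ i, αhat i •
          (ContinuousLinearMap.adjoint (fderiv ℝ (fun x' => Q i (x', z.2)) z.1))
            (F (Q i z, P i z))
        + ∑ r, ΔW r • ∑ i, βhat i •
          (ContinuousLinearMap.adjoint (fderiv ℝ (fun x' => Q i (x', z.2)) z.1))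
            (f r (Q i z, P i z)))
    (hFp : ∀ z : E N × E N, Fplus z =
        Δt • ∑ i, αhat i •
          (ContinuousLinearMap.adjoint (fderiv ℝ (fun y' => Q i (z.1, y')) z.2))
            (F (Q i z, P i z))
        + ∑ r, ΔW r • ∑ i, βhat i •
          (ContinuousLinearMap.adjoint (fderiv ℝ (fun y' => Q i (z.1, y')) z.2))
            (f r (Q i z, P i z))) :
    ∀ z ∈ U, D2 Hd z.1 z.2 = qplus z + Fplus z ∧ D1 Hd z.1 z.2 = pminus z + Fminus z := by
  classical
  -- channelized data
  have hHH2 : ∀ g, ContDiff ℝ 2 (ch H h g) := by rintro (_ | r); exacts [hH, hh r]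
  have hHH1 : ∀ g, Differentiable ℝ (ch H h g) := fun g =>
    (hHH2 g).differentiable two_ne_zero
  have hbar : ∀ (g g' : Option (Fin m)) (i j : Fin s), ch α (fun _ => β) g i * ch abar (fun _ => bbar) g' i j
      + ch α (fun _ => β) g' j * ch a (fun _ => b) g j i
      = ch α (fun _ => β) g i * ch α (fun _ => β) g' j := by
    rintro (_ | r) (_ | r') i j <;> simp only [ch_none, ch_some]
    exacts [hc1 i j, hc4 i j, hc3 i j, hc2 i j]
  have hhat : ∀ (g g' : Option (Fin m)) (i j : Fin s), ch α (fun _ => β) g i * ch ahat (fun _ => bhat) g' i j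
      + ch αhat (fun _ => βhat) g' j * ch a (fun _ => b) g j i
      = ch α (fun _ => β) g i * ch αhat (fun _ => βhat) g' j := by
    rintro (_ | r) (_ | r') i j <;> simp only [ch_none, ch_some]
    exacts [hc5 i j, hc6 i j, hc7 i j, hc8 i j]
  -- channelized hypotheses
  have hQ' : ∀ w ∈ U, ∀ i, Q i w = w.1 + ∑ g, ch Δt ΔW g •
      ∑ j, ch a (fun _ => b) g i j • D2 (ch H h g) (Q j w) (P j w) := by
    intro w hw i
    simp only [Fintype.sum_option, ch_none, ch_some]
    rw [hQ w hw i, add_assoc]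
  have hqp' : ∀ w ∈ U, qplus w = w.1 + ∑ g, ch Δt ΔW g •
      ∑ i, ch α (fun _ => β) g i • D2 (ch H h g) (Q i w) (P i w) := by
    intro w hw
    simp only [Fintype.sum_option, ch_none, ch_some]
    rw [hqp w hw, add_assoc]
  have hpp' : ∀ w ∈ U, w.2 = pminus w
      - ∑ g, ch Δt ΔW g • ∑ i, ch α (fun _ => β) g i • D1 (ch H h g) (Q i w) (P i w)
      + ∑ g, ch Δt ΔW g • ∑ i, ch αhat (fun _ => βhat) g i • ch F f g (Q i w, P i w) := by
    intro w hw
    simp only [Fintype.sum_option, ch_none, ch_some]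
    rw [hpp w hw]; abel
  have hP' : ∀ w ∈ U, ∀ i, P i w = pminus w
      - ∑ g, ch Δt ΔW g • ∑ j, ch abar (fun _ => bbar) g i j • D1 (ch H h g) (Q j w) (P j w)
      + ∑ g, ch Δt ΔW g • ∑ j, ch ahat (fun _ => bhat) g i j • ch F f g (Q j w, P j w) := by
    intro w hw i
    simp only [Fintype.sum_option, ch_none, ch_some]
    rw [hP w hw i]; abel
  have hHd' : ∀ w, Hd w = (inner ℝ w.2 (qplus w) : ℝ) - ∑ g, ch Δt ΔW g *
      ∑ i, ch α (fun _ => β) g i *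
        ((inner ℝ (P i w) (D2 (ch H h g) (Q i w) (P i w)) : ℝ) - ch H h g (Q i w, P i w)) := by
    intro w
    simp only [Fintype.sum_option, ch_none, ch_some]
    rw [hHd w]; ring
  have hFm' : ∀ w, Fminus w = ∑ g, ch Δt ΔW g • ∑ i, ch αhat (fun _ => βhat) g i •
      (ContinuousLinearMap.adjoint (fderiv ℝ (fun x' => Q i (x', w.2)) w.1))
        (ch F f g (Q i w, P i w)) := by
    intro w
    simp only [Fintype.sum_option, ch_none, ch_some]
    rw [hFm w]
  have hFp' : ∀ w, Fplus w = ∑ g, ch Δt ΔW g • ∑ i, ch αhat (fun _ => βhat) g i •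
      (ContinuousLinearMap.adjoint (fderiv ℝ (fun y' => Q i (w.1, y')) w.2))
        (ch F f g (Q i w, P i w)) := by
    intro w
    simp only [Fintype.sum_option, ch_none, ch_some]
    rw [hFp w]
  have hHdfun : Hd = fun w => (inner ℝ w.2 (qplus w) : ℝ) - ∑ g, ch Δt ΔW g *
      ∑ i, ch α (fun _ => β) g i *
        ((inner ℝ (P i w) (D2 (ch H h g) (Q i w) (P i w)) : ℝ) - ch H h g (Q i w, P i w)) :=
    funext hHd'
  intro z hz
  have dQ : ∀ i, DifferentiableAt ℝ (Q i) z := fun i => hQdiff i z hz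
  have dP : ∀ i, DifferentiableAt ℝ (P i) z := fun i => hPdiff i z hz
  have dQP : ∀ i, DifferentiableAt ℝ (fun w => (Q i w, P i w)) z := fun i =>
    (dQ i).prodMk (dP i)
  have dHp : ∀ g i, DifferentiableAt ℝ (fun w => D2 (ch H h g) (Q i w) (P i w)) z := fun g i =>
    DifferentiableAt.comp (g := fun p : E N × E N => D2 (ch H h g) p.1 p.2)
      (f := fun w => (Q i w, P i w)) z
      (differentiable_D2 (ch H h g) (hHH2 g) (Q i z, P i z)) (dQP i)
  have hcomp : ∀ g i, HasFDerivAt (fun w => ch H h g (Q i w, P i w))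
      ((fderiv ℝ (ch H h g) (Q i z, P i z)).comp
        ((fderiv ℝ (Q i) z).prod (fderiv ℝ (P i) z))) z := fun g i =>
    HasFDerivAt.comp z (hHH1 g (Q i z, P i z)).hasFDerivAt
      ((dQ i).hasFDerivAt.prodMk (dP i).hasFDerivAt)
  have hHdAt : HasFDerivAt Hd
      ((fderivInnerCLM ℝ (z.2, qplus z)).comp
          ((ContinuousLinearMap.snd ℝ (E N) (E N)).prod (fderiv ℝ qplus z))
        - ∑ g, ch Δt ΔW g • ∑ i, ch α (fun _ => β) g i •
            (((fderivInnerCLM ℝ (P i z, D2 (ch H h g) (Q i z) (P i z))).comp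
                ((fderiv ℝ (P i) z).prod
                  (fderiv ℝ (fun w => D2 (ch H h g) (Q i w) (P i w)) z)))
              - ((fderiv ℝ (ch H h g) (Q i z, P i z)).comp
                  ((fderiv ℝ (Q i) z).prod (fderiv ℝ (P i) z))))) z := by
    rw [hHdfun]
    exact (HasFDerivAt.inner ℝ hasFDerivAt_snd (hqdiff z hz).hasFDerivAt).sub
      (HasFDerivAt.fun_sum fun g _ => ((HasFDerivAt.fun_sum fun i _ =>
        (((HasFDerivAt.inner ℝ (dP i).hasFDerivAt (dHp g i).hasFDerivAt).sub
          (hcomp g i)).const_mul _)).const_mul _))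
  have hval : ∀ u v : E N, fderiv ℝ Hd z (u, v)
      = (inner ℝ (pminus z + Fminus z) u : ℝ) + (inner ℝ (qplus z + Fplus z) v : ℝ) := by
    intro u v
    have heq1 : fderiv ℝ qplus z = fderiv ℝ (fun w : E N × E N => w.1 + ∑ g, ch Δt ΔW g •
        ∑ i, ch α (fun _ => β) g i • D2 (ch H h g) (Q i w) (P i w)) z :=
      Filter.EventuallyEq.fderiv_eq
        (Filter.eventuallyEq_of_mem (hU.mem_nhds hz) fun w hw => hqp' w hw)
    have hR1 : HasFDerivAt (fun w : E N × E N => w.1 + ∑ g, ch Δt ΔW g •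
        ∑ i, ch α (fun _ => β) g i • D2 (ch H h g) (Q i w) (P i w))
        (ContinuousLinearMap.fst ℝ (E N) (E N) + ∑ g, ch Δt ΔW g •
          ∑ i, ch α (fun _ => β) g i •
            fderiv ℝ (fun w => D2 (ch H h g) (Q i w) (P i w)) z) z :=
      hasFDerivAt_fst.add (HasFDerivAt.fun_sum fun g _ =>
        (HasFDerivAt.fun_sum fun i _ => ((dHp g i).hasFDerivAt.fun_const_smul _)).fun_const_smul _)
    have h1 : fderiv ℝ qplus z (u, v) = u + ∑ g, ch Δt ΔW g •
        ∑ i, ch α (fun _ => β) g i •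
          fderiv ℝ (fun w => D2 (ch H h g) (Q i w) (P i w)) z (u, v) := by
      rw [heq1, hR1.fderiv]
      simp [ContinuousLinearMap.add_apply, ContinuousLinearMap.sum_apply,
        ContinuousLinearMap.smul_apply]
    have h2 : ∀ i, fderiv ℝ (Q i) z (u, v) = u + ∑ g, ch Δt ΔW g •
        ∑ j, ch a (fun _ => b) g i j •
          fderiv ℝ (fun w => D2 (ch H h g) (Q j w) (P j w)) z (u, v) := by
      intro i
      have heq2 : fderiv ℝ (Q i) z = fderiv ℝ (fun w : E N × E N => w.1 + ∑ g, ch Δt ΔW g •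
          ∑ j, ch a (fun _ => b) g i j • D2 (ch H h g) (Q j w) (P j w)) z :=
        Filter.EventuallyEq.fderiv_eq
          (Filter.eventuallyEq_of_mem (hU.mem_nhds hz) fun w hw => hQ' w hw i)
      have hR2 : HasFDerivAt (fun w : E N × E N => w.1 + ∑ g, ch Δt ΔW g •
          ∑ j, ch a (fun _ => b) g i j • D2 (ch H h g) (Q j w) (P j w))
          (ContinuousLinearMap.fst ℝ (E N) (E N) + ∑ g, ch Δt ΔW g •
            ∑ j, ch a (fun _ => b) g i j •
              fderiv ℝ (fun w => D2 (ch H h g) (Q j w) (P j w)) z) z :=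
        hasFDerivAt_fst.add (HasFDerivAt.fun_sum fun g _ =>
          (HasFDerivAt.fun_sum fun j _ => ((dHp g j).hasFDerivAt.fun_const_smul _)).fun_const_smul _)
      rw [heq2, hR2.fderiv]
      simp [ContinuousLinearMap.add_apply, ContinuousLinearMap.sum_apply,
        ContinuousLinearMap.smul_apply]
    have h3 := hpp' z hz
    have h4 : ∀ i, z.2 - P i z = ∑ g, ch Δt ΔW g •
        (∑ j, (ch abar (fun _ => bbar) g i j - ch α (fun _ => β) g j) •
            D1 (ch H h g) (Q j z) (P j z)
          + ∑ j, (ch αhat (fun _ => βhat) g j - ch ahat (fun _ => bhat) g i j) •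
            ch F f g (Q j z, P j z)) := by
      intro i
      rw [hpp' z hz, hP' z hz i]
      simp only [sub_smul, smul_add, smul_sub, Finset.smul_sum,
        Finset.sum_add_distrib, Finset.sum_sub_distrib]
      abel
    have hsplit : ∀ i, fderiv ℝ (fun x' => Q i (x', z.2)) z.1 u
        + fderiv ℝ (fun y' => Q i (z.1, y')) z.2 v = fderiv ℝ (Q i) z (u, v) := by
      intro i
      have hQz : HasFDerivAt (Q i) (fderiv ℝ (Q i) z) (z.1, z.2) := by
        rw [Prod.mk.eta]; exact (dQ i).hasFDerivAt
      have p1 : HasFDerivAt (fun x' => Q i (x', z.2))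
          ((fderiv ℝ (Q i) z).comp (ContinuousLinearMap.inl ℝ (E N) (E N))) z.1 :=
        hQz.comp z.1 (hasFDerivAt_prodMk_left z.1 z.2)
      have p2 : HasFDerivAt (fun y' => Q i (z.1, y'))
          ((fderiv ℝ (Q i) z).comp (ContinuousLinearMap.inr ℝ (E N) (E N))) z.2 :=
        hQz.comp z.2 (hasFDerivAt_prodMk_right z.1 z.2)
      rw [p1.fderiv, p2.fderiv]
      simp only [ContinuousLinearMap.comp_apply, ContinuousLinearMap.inl_apply,
        ContinuousLinearMap.inr_apply]
      rw [← map_add]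
      congr 1
      simp [Prod.ext_iff]
    have h5 : (inner ℝ (Fminus z) u : ℝ) + (inner ℝ (Fplus z) v : ℝ)
        = ∑ g, ch Δt ΔW g * ∑ i, ch αhat (fun _ => βhat) g i *
            (inner ℝ (ch F f g (Q i z, P i z)) (fderiv ℝ (Q i) z (u, v)) : ℝ) := by
      rw [hFm' z, hFp' z]
      simp only [sum_inner, real_inner_smul_left]
      rw [← Finset.sum_add_distrib]
      apply Finset.sum_congr rfl; intro g _
      rw [← mul_add, ← Finset.sum_add_distrib]
      congr 1
      apply Finset.sum_congr rfl; intro i _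
      rw [← mul_add]
      congr 1
      rw [ContinuousLinearMap.adjoint_inner_left, ContinuousLinearMap.adjoint_inner_left,
        ← inner_add_right, hsplit i]
    have hS : ∀ (g : Option (Fin m)) (i : Fin s),
        (fderiv ℝ (ch H h g) (Q i z, P i z))
          (fderiv ℝ (Q i) z (u, v), fderiv ℝ (P i) z (u, v))
        = (inner ℝ (D1 (ch H h g) (Q i z) (P i z)) (fderiv ℝ (Q i) z (u, v)) : ℝ)
          + (inner ℝ (D2 (ch H h g) (Q i z) (P i z)) (fderiv ℝ (P i) z (u, v)) : ℝ) :=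
      fun g i => fderiv_eq_inner (ch H h g) (hHH1 g (Q i z, P i z)) _ _
    have main := assemble (ch Δt ΔW) (ch a fun _ => b) (ch abar fun _ => bbar)
      (ch ahat fun _ => bhat) (ch α fun _ => β) (ch αhat fun _ => βhat) hbar hhat
      u v z.2 (qplus z) (pminus z) (Fminus z) (Fplus z) (fderiv ℝ qplus z (u, v))
      (fun i => P i z) (fun i => fderiv ℝ (Q i) z (u, v))
      (fun i => fderiv ℝ (P i) z (u, v))
      (fun g i => D1 (ch H h g) (Q i z) (P i z))
      (fun g i => ch F f g (Q i z, P i z))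
      (fun g i => D2 (ch H h g) (Q i z) (P i z))
      (fun g i => fderiv ℝ (fun w => D2 (ch H h g) (Q i w) (P i w)) z (u, v))
      h1 h2 h3 h4 h5
    rw [hHdAt.fderiv]
    simp only [ContinuousLinearMap.sub_apply, ContinuousLinearMap.sum_apply,
      ContinuousLinearMap.smul_apply, ContinuousLinearMap.comp_apply,
      ContinuousLinearMap.prod_apply, fderivInnerCLM_apply, ContinuousLinearMap.coe_snd',
      smul_eq_mul, hS]
    linarith [main]
  have hHdz : HasFDerivAt Hd (fderiv ℝ Hd z) (z.1, z.2) := by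
    rw [Prod.mk.eta]; exact hHdAt.differentiableAt.hasFDerivAt
  constructor
  · have hpart := hHdz.comp z.2 (hasFDerivAt_prodMk_right z.1 z.2)
    have hceq : (fderiv ℝ Hd z).comp (ContinuousLinearMap.inr ℝ (E N) (E N))
        = InnerProductSpace.toDual ℝ (E N) (qplus z + Fplus z) := by
      apply ContinuousLinearMap.ext; intro v'
      simp only [ContinuousLinearMap.comp_apply, ContinuousLinearMap.inr_apply,
        InnerProductSpace.toDual_apply_apply]
      rw [hval 0 v']
      simp
    show gradient (fun y' => Hd (z.1, y')) z.2 = qplus z + Fplus z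
    exact (hasGradientAt_iff_hasFDerivAt.mpr (hceq ▸ hpart)).gradient
  · have hpart := hHdz.comp (f := fun e : E N => (e, z.2)) z.1 (hasFDerivAt_prodMk_left z.1 z.2)
    have hceq : (fderiv ℝ Hd z).comp (ContinuousLinearMap.inl ℝ (E N) (E N))
        = InnerProductSpace.toDual ℝ (E N) (pminus z + Fminus z) := by
      apply ContinuousLinearMap.ext; intro u'
      simp only [ContinuousLinearMap.comp_apply, ContinuousLinearMap.inl_apply,
        InnerProductSpace.toDual_apply_apply]
      rw [hval u' 0]
      simp
    show gradient (fun x' => Hd (x', z.2)) z.1 = pminus z + Fminus z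
    exact (hasGradientAt_iff_hasFDerivAt.mpr (hceq ▸ hpart)).gradient
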